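/- There is a unique p_0 in (0,1) such that 2√π · 3^{-p_0/2} = (1-p_0)(2-p_0)Γ((1-p_0)/2); moreover 2√π·3^{-p/2} > (1-p)(2-p)Γ((1-p)/2) for p in (p_0,1) and 2√π·3^{-p/2} < (1-p)(2-p)Γ((1-p)/2) for p in (0,p_0). -/

import Mathlib

open Real Set Filter Finset

noncomputable def Gfun (p : ℝ) : ℝ := (2 - p) * Real.Gamma ((3 - p) / 2) * (3:ℝ) ^ (p / 2)

lemma Gfun_pos {p : ℝ} (hp : p ≤ 1) : 0 < Gfun p := by
  have h2 : (0:ℝ) < (3 - p) / 2 := by linarith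
  have hg := Real.Gamma_pos_of_pos h2
  have h3 : (0:ℝ) < (3:ℝ) ^ (p / 2) := Real.rpow_pos_of_pos (by norm_num) _
  have h1 : (0:ℝ) < 2 - p := by linarith
  unfold Gfun; positivity

lemma Gfun_continuousOn : ContinuousOn Gfun (Icc (0:ℝ) 1) := by
  intro p hp
  simp only [Set.mem_Icc] at hp
  have hg : ContinuousAt Real.Gamma ((3 - p) / 2) :=
    (Real.differentiableAt_Gamma (fun m => by
      have : (0:ℝ) ≤ m := Nat.cast_nonneg m
      intro h; nlinarith [hp.2])).continuousAt
  have haff : ContinuousAt (fun q : ℝ => (3 - q) / 2) p := by fun_prop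
  have h3 : ContinuousAt (fun q : ℝ => (3:ℝ) ^ (q / 2)) p := by
    have e : (fun q : ℝ => (3:ℝ) ^ (q / 2)) = fun q : ℝ => Real.exp (Real.log 3 * (q / 2)) := by
      funext q; rw [Real.rpow_def_of_pos (by norm_num)]
    rw [e]; fun_prop
  exact (((continuousAt_const.sub continuousAt_id).mul (ContinuousAt.comp (x := p) hg haff)).mul h3).continuousWithinAt

lemma prod_one_sub_ge (f : ℕ → ℝ) (hf0 : ∀ j, 0 ≤ f j) (hf1 : ∀ j, f j ≤ 1) (n : ℕ) :
    1 - ∑ j ∈ range n, f j ≤ ∏ j ∈ range n, (1 - f j) := by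
  induction n with
  | zero => simp
  | succ n ih =>
    rw [Finset.prod_range_succ, Finset.sum_range_succ]
    have h1 : 0 ≤ ∏ j ∈ range n, (1 - f j) :=
      Finset.prod_nonneg fun j _ => by linarith [hf1 j]
    have h2 : 0 ≤ ∑ j ∈ range n, f j := Finset.sum_nonneg fun j _ => hf0 j
    nlinarith [hf0 n, hf1 n]

lemma sum_inv_sq_le {m : ℝ} (hm : 1/2 < m) (n : ℕ) :
    ∑ j ∈ range n, 1/(m + j)^2 ≤ 1/(m - 1/2) - 1/(m + n - 1/2) := by
  induction n with
  | zero => simp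
  | succ n ih =>
    rw [Finset.sum_range_succ]
    have hn : (0:ℝ) ≤ n := Nat.cast_nonneg n
    have h1 : (0:ℝ) < m + n - 1/2 := by linarith
    have h2 : (0:ℝ) < m + n + 1/2 := by linarith
    have key : 1/(m+n)^2 ≤ 1/(m+n-1/2) - 1/(m+n+1/2) := by
      have hden : (m+n-1/2)*(m+n+1/2) = (m+n)^2 - 1/4 := by ring
      have e : 1/(m+n-1/2) - 1/(m+n+1/2) = 1/((m+n)^2 - 1/4) := by
        rw [div_sub_div _ _ h1.ne' h2.ne', hden]; congr 1; ring
      rw [e]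
      apply one_div_le_one_div_of_le (by nlinarith) (by nlinarith)
    push_cast
    have : (m + (n+1) - 1/2) = m + n + 1/2 := by ring
    rw [this]
    linarith

set_option maxHeartbeats 2000000 in
lemma gamma_midpoint {a b : ℝ} (ha : 1 ≤ a) (hab : a < b) (hb : b ≤ 3/2) :
    Real.Gamma a * Real.Gamma b * ((a - 1/2) * (b - 1/2)) <
      Real.Gamma ((a + b) / 2) ^ 2 * ((a + b) / 2 - 1/2) ^ 2 := by
  obtain ⟨m, hm_def⟩ : ∃ x : ℝ, x = (a + b) / 2 := ⟨_, rfl⟩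
  obtain ⟨d, hd_def⟩ : ∃ x : ℝ, x = (b - a) / 2 := ⟨_, rfl⟩
  obtain ⟨t, ht_def⟩ : ∃ x : ℝ, x = m - 1/2 := ⟨_, rfl⟩
  rw [← hm_def, ← ht_def]
  have had : a = m - d := by rw [hm_def, hd_def]; ring
  have hbd : b = m + d := by rw [hm_def, hd_def]; ring
  have hd0 : 0 < d := by rw [hd_def]; linarith
  have hd4 : d ≤ 1/4 := by rw [hd_def]; linarith
  have hm1 : 1 < m := by rw [hm_def]; linarith
  have hm32 : m < 3/2 := by rw [hm_def]; linarith
  have ht : 1/2 < t := by rw [ht_def]; linarith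
  have ht1 : t < 1 := by rw [ht_def]; linarith
  have hd2 : d^2 ≤ 1/16 := by nlinarith
  have htd : 0 < t - d^2 := by linarith
  have htd2 : (0:ℝ) < t^2 - d^2 := by nlinarith
  have ha0 : 0 < a := by linarith
  have hb0 : 0 < b := by linarith
  have hm0 : 0 < m := by linarith
  obtain ⟨C, hC_def⟩ : ∃ x : ℝ, x = t / (t - d^2) := ⟨_, rfl⟩
  have hC0 : 0 < C := by rw [hC_def]; exact div_pos (by linarith) htd
  have hGm : 0 < Real.Gamma m := Real.Gamma_pos_of_pos hm0
  have h8 : C * Real.Gamma m ^ 2 * (t^2 - d^2) < Real.Gamma m ^ 2 * t^2 := by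
    rw [hC_def, div_mul_eq_mul_div, div_mul_eq_mul_div, div_lt_iff₀ htd]
    have hGm2 : 0 < Real.Gamma m ^ 2 := by positivity
    nlinarith [mul_pos (mul_pos hGm2 (mul_pos hd0 hd0)) (mul_pos (by linarith : (0:ℝ) < t) (by linarith : (0:ℝ) < 1 - t))]
  -- step 1 : bound on GammaSeq products
  have step1 : ∀ n : ℕ, 1 ≤ n →
      Real.GammaSeq a n * Real.GammaSeq b n ≤ C * Real.GammaSeq m n ^ 2 := by
    intro n hn
    have hN : (0:ℝ) < n := by exact_mod_cast hn
    have hPa : (0:ℝ) < ∏ j ∈ range (n+1), (a + j) :=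
      Finset.prod_pos fun j _ => by positivity
    have hPb : (0:ℝ) < ∏ j ∈ range (n+1), (b + j) :=
      Finset.prod_pos fun j _ => by positivity
    have hPm : (0:ℝ) < ∏ j ∈ range (n+1), (m + j) :=
      Finset.prod_pos fun j _ => by positivity
    -- core product inequality
    have core : (∏ j ∈ range (n+1), (m + j))^2 ≤
        C * ((∏ j ∈ range (n+1), (a + j)) * (∏ j ∈ range (n+1), (b + j))) := by
      have hsplit : (∏ j ∈ range (n+1), (a + j)) * (∏ j ∈ range (n+1), (b + j)) =
          (∏ j ∈ range (n+1), (m + j))^2 * ∏ j ∈ range (n+1), (1 - d^2/(m + j)^2) := by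
        rw [← Finset.prod_mul_distrib, sq, ← Finset.prod_mul_distrib, ← Finset.prod_mul_distrib]
        apply Finset.prod_congr rfl
        intro j _
        have hmj : (0:ℝ) < m + j := by positivity
        field_simp
        rw [had, hbd]; ring
      have hf0 : ∀ j : ℕ, (0:ℝ) ≤ d^2/(m + j)^2 := fun j => by positivity
      have hf1 : ∀ j : ℕ, d^2/(m + j)^2 ≤ 1 := by
        intro j
        have hj : (0:ℝ) ≤ j := Nat.cast_nonneg j
        rw [div_le_one (by positivity)]
        nlinarith
      have hW := prod_one_sub_ge (fun j => d^2/(m + j)^2) hf0 hf1 (n+1)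
      have hsum : ∑ j ∈ range (n+1), d^2/(m + j)^2 ≤ d^2 / t := by
        have h1 := sum_inv_sq_le (by linarith : 1/2 < m) (n+1)
        have h2 : ∑ j ∈ range (n+1), d^2/(m + j)^2
            = d^2 * ∑ j ∈ range (n+1), 1/(m + j)^2 := by
          rw [Finset.mul_sum]; apply Finset.sum_congr rfl; intro j _; ring
        have h3 : (0:ℝ) < m + (n+1:ℕ) - 1/2 := by
          have : (0:ℝ) ≤ (n+1:ℕ) := Nat.cast_nonneg _
          linarith
        have h4 : ∑ j ∈ range (n+1), 1/(m + j)^2 ≤ 1 / t := by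
          have h5 : 0 ≤ 1 / (m + (n+1:ℕ) - 1/2) := by positivity
          rw [ht_def]; linarith
        rw [h2]
        calc d^2 * ∑ j ∈ range (n+1), 1/(m + j)^2 ≤ d^2 * (1/t) := by
              apply mul_le_mul_of_nonneg_left h4 (by positivity)
          _ = d^2 / t := by ring
      -- combine
      have hβ : 1 - d^2 / t ≤ ∏ j ∈ range (n+1), (1 - d^2/(m + j)^2) := by
        calc 1 - d^2 / t ≤ 1 - ∑ j ∈ range (n+1), d^2/(m + j)^2 := by linarith
          _ ≤ _ := hW
      have htpos : (0:ℝ) < t := by linarith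
      have h5 : (∏ j ∈ range (n+1), (m + j))^2 * (1 - d^2/t) ≤
          (∏ j ∈ range (n+1), (a + j)) * (∏ j ∈ range (n+1), (b + j)) := by
        rw [hsplit]
        apply mul_le_mul_of_nonneg_left hβ (by positivity)
      have e6 : C * ((∏ j ∈ range (n+1), (m + j))^2 * (1 - d^2/t)) =
          (∏ j ∈ range (n+1), (m + j))^2 := by
        rw [hC_def]; field_simp
      calc (∏ j ∈ range (n+1), (m + j))^2
          = C * ((∏ j ∈ range (n+1), (m + j))^2 * (1 - d^2/t)) := e6.symm
        _ ≤ C * ((∏ j ∈ range (n+1), (a + j)) * (∏ j ∈ range (n+1), (b + j))) := by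
            apply mul_le_mul_of_nonneg_left h5 (le_of_lt hC0)
    -- now the GammaSeq inequality
    rw [Real.GammaSeq, Real.GammaSeq, Real.GammaSeq]
    rw [div_mul_div_comm, div_pow, mul_div_assoc',
      div_le_div_iff₀ (by positivity) (by positivity)]
    have hrpow : (n:ℝ)^a * (n:ℝ)^b = ((n:ℝ)^m)^(2:ℕ) := by
      rw [← Real.rpow_add hN, ← Real.rpow_natCast ((n:ℝ)^m) 2, ← Real.rpow_mul (le_of_lt hN)]
      congr 1
      rw [hm_def]; push_cast; ring
    calc (n:ℝ)^a * (n.factorial:ℝ) * ((n:ℝ)^b * (n.factorial:ℝ)) * (∏ j ∈ range (n+1), (m + j))^2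
        = ((n:ℝ)^a * (n:ℝ)^b) * ((n.factorial:ℝ))^2 * (∏ j ∈ range (n+1), (m + j))^2 := by ring
      _ = ((n:ℝ)^m)^(2:ℕ) * ((n.factorial:ℝ))^2 * (∏ j ∈ range (n+1), (m + j))^2 := by rw [hrpow]
      _ ≤ ((n:ℝ)^m)^(2:ℕ) * ((n.factorial:ℝ))^2 *
            (C * ((∏ j ∈ range (n+1), (a + j)) * (∏ j ∈ range (n+1), (b + j)))) := by
          apply mul_le_mul_of_nonneg_left core (by positivity)
      _ = C * ((n:ℝ)^m * (n.factorial:ℝ))^2 * ((∏ j ∈ range (n+1), (a + j)) * (∏ j ∈ range (n+1), (b + j))) := by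
          ring
  -- step 2 : pass to the limit
  have hlim : Real.Gamma a * Real.Gamma b ≤ C * Real.Gamma m ^ 2 := by
    have hconv1 : Tendsto (fun n => Real.GammaSeq a n * Real.GammaSeq b n) atTop
        (nhds (Real.Gamma a * Real.Gamma b)) :=
      (Real.GammaSeq_tendsto_Gamma a).mul (Real.GammaSeq_tendsto_Gamma b)
    have hconv2 : Tendsto (fun n => C * Real.GammaSeq m n ^ 2) atTop
        (nhds (C * Real.Gamma m ^ 2)) :=
      tendsto_const_nhds.mul ((Real.GammaSeq_tendsto_Gamma m).pow 2)
    refine le_of_tendsto_of_tendsto hconv1 hconv2 ?_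
    filter_upwards [eventually_ge_atTop 1] with n hn
    exact step1 n hn
  -- step 3 : conclude
  have habd : (a - 1/2) * (b - 1/2) = t^2 - d^2 := by rw [had, hbd, ht_def]; ring
  rw [habd]
  have h7 : Real.Gamma a * Real.Gamma b * (t^2 - d^2) ≤ C * Real.Gamma m ^ 2 * (t^2 - d^2) := by
    apply mul_le_mul_of_nonneg_right hlim htd2.le
  linarith

lemma Gfun_eq (p : ℝ) : Gfun p = (2 - p) * Real.Gamma ((3 - p) / 2) * (3:ℝ) ^ (p / 2) := rfl

lemma Gfun_midpoint {p q : ℝ} (hp : 0 ≤ p) (hpq : p < q) (hq : q ≤ 1) :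
    Gfun p * Gfun q < Gfun ((p + q) / 2) ^ 2 := by
  have key := gamma_midpoint (a := (3 - q)/2) (b := (3 - p)/2)
    (by linarith) (by linarith) (by linarith)
  have hmid : ((3 - q)/2 + (3 - p)/2)/2 = (3 - (p+q)/2)/2 := by ring
  rw [hmid] at key
  have hexp : (3:ℝ)^(p/2) * (3:ℝ)^(q/2) = ((3:ℝ)^(((p+q)/2)/2))^(2:ℕ) := by
    rw [← Real.rpow_add (by norm_num : (0:ℝ) < 3),
      ← Real.rpow_natCast ((3:ℝ)^(((p+q)/2)/2)) 2,
      ← Real.rpow_mul (by norm_num : (0:ℝ) ≤ 3)]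
    congr 1; ring
  have hpos : (0:ℝ) < 4 * ((3:ℝ)^(p/2) * (3:ℝ)^(q/2)) := by
    have := Real.rpow_pos_of_pos (show (0:ℝ) < 3 by norm_num) (p/2)
    have := Real.rpow_pos_of_pos (show (0:ℝ) < 3 by norm_num) (q/2)
    positivity
  have key2 := mul_lt_mul_of_pos_right key hpos
  rw [Gfun_eq, Gfun_eq, Gfun_eq]
  calc (2 - p) * Real.Gamma ((3 - p) / 2) * (3:ℝ)^(p/2) *
        ((2 - q) * Real.Gamma ((3 - q) / 2) * (3:ℝ)^(q/2))
      = Real.Gamma ((3 - q)/2) * Real.Gamma ((3 - p)/2) *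
          (((3 - q)/2 - 1/2) * ((3 - p)/2 - 1/2)) * (4 * ((3:ℝ)^(p/2) * (3:ℝ)^(q/2))) := by
        ring
    _ < Real.Gamma ((3 - (p+q)/2)/2) ^ 2 * ((3 - (p+q)/2)/2 - 1/2) ^ 2 *
          (4 * ((3:ℝ)^(p/2) * (3:ℝ)^(q/2))) := key2
    _ = ((2 - (p+q)/2) * Real.Gamma ((3 - (p+q)/2)/2) * (3:ℝ)^(((p+q)/2)/2))^2 := by
        rw [hexp]; ring

lemma Gamma_le_one {x : ℝ} (h1 : 1 ≤ x) (h2 : x ≤ 2) : Real.Gamma x ≤ 1 := by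
  have hc := Real.convexOn_log_Gamma.2 (Set.mem_Ioi.mpr one_pos)
    (Set.mem_Ioi.mpr two_pos) (by linarith : (0:ℝ) ≤ 2 - x) (by linarith : (0:ℝ) ≤ x - 1)
    (by ring : (2 - x) + (x - 1) = 1)
  have hG2 : Real.Gamma 2 = 1 := by
    rw [show (2:ℝ) = 1 + 1 by norm_num, Real.Gamma_add_one one_ne_zero, Real.Gamma_one, mul_one]
  simp only [Function.comp_apply, smul_eq_mul, Real.Gamma_one, hG2, Real.log_one,
    mul_zero, add_zero] at hc
  have he : (2 - x) * 1 + (x - 1) * 2 = x := by ring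
  rw [he] at hc
  have hGx : 0 < Real.Gamma x := Real.Gamma_pos_of_pos (by linarith)
  calc Real.Gamma x = Real.exp (Real.log (Real.Gamma x)) := (Real.exp_log hGx).symm
    _ ≤ Real.exp 0 := Real.exp_le_exp.mpr hc
    _ = 1 := Real.exp_zero

lemma Gamma_lower (x : ℝ) (hx : 0 < x) (hx1 : x < 1) (n : ℕ) :
    (n.factorial : ℝ) * (x + n) ^ x ≤ Real.Gamma (x + n + 1) := by
  have hxn : (0:ℝ) < x + n := by positivity
  have hxn1 : (0:ℝ) < x + n + 1 := by positivity
  have hc := Real.convexOn_log_Gamma.2 (Set.mem_Ioi.mpr hxn1) (Set.mem_Ioi.mpr hxn)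
    (by linarith : (0:ℝ) ≤ 1 - x) (le_of_lt hx) (by ring : (1 - x) + x = 1)
  have he : (1 - x) * (x + n + 1) + x * (x + n) = (n:ℝ) + 1 := by ring
  simp only [Function.comp_apply, smul_eq_mul] at hc
  rw [he] at hc
  have hfac : Real.Gamma ((n:ℝ) + 1) = n.factorial := Real.Gamma_nat_eq_factorial n
  rw [hfac] at hc
  have hrec : Real.Gamma (x + n) = Real.Gamma (x + n + 1) / (x + n) := by
    rw [Real.Gamma_add_one hxn.ne']; field_simp
  have hG1 : 0 < Real.Gamma (x + n + 1) := Real.Gamma_pos_of_pos hxn1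
  have hlog : Real.log (Real.Gamma (x + n)) =
      Real.log (Real.Gamma (x + n + 1)) - Real.log (x + n) := by
    rw [hrec, Real.log_div hG1.ne' hxn.ne']
  rw [hlog] at hc
  -- hc : log n! ≤ (1-x) log Γ(x+n+1) + x (log Γ(x+n+1) - log (x+n))
  have hc2 : Real.log (n.factorial : ℝ) + x * Real.log (x + n) ≤
      Real.log (Real.Gamma (x + n + 1)) := by nlinarith [hc]
  have hfacpos : (0:ℝ) < (n.factorial : ℝ) := by positivity
  calc (n.factorial : ℝ) * (x + n) ^ x
      = Real.exp (Real.log (n.factorial : ℝ) + x * Real.log (x + n)) := by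
        rw [Real.exp_add, Real.exp_log hfacpos, Real.rpow_def_of_pos hxn]
        ring_nf
    _ ≤ Real.exp (Real.log (Real.Gamma (x + n + 1))) := Real.exp_le_exp.mpr hc2
    _ = Real.Gamma (x + n + 1) := Real.exp_log hG1

lemma Gamma_shift (x : ℝ) (hx : 0 < x) (n : ℕ) :
    Real.Gamma (x + n) = (∏ k ∈ range n, (x + k)) * Real.Gamma x := by
  induction n with
  | zero => simp
  | succ n ih =>
    have hxn : x + n ≠ 0 := by positivity
    have : x + ((n:ℝ) + 1) = (x + n) + 1 := by ring
    rw [Finset.prod_range_succ]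
    push_cast
    rw [this, Real.Gamma_add_one hxn, ih]
    ring

lemma G_zero : Gfun 0 = Real.sqrt π := by
  rw [Gfun_eq]
  rw [show ((3:ℝ) - 0)/2 = 1/2 + 1 by norm_num,
    Real.Gamma_add_one (by norm_num : (1/2:ℝ) ≠ 0), Real.Gamma_one_half_eq,
    show ((0:ℝ)/2) = 0 by norm_num, Real.rpow_zero]
  ring

lemma G_half : Real.sqrt π < Gfun (1/2) := by
  have hsqrtpi : Real.sqrt π < 1.7725 := by
    rw [Real.sqrt_lt' (by norm_num)]
    nlinarith [Real.pi_lt_d6]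
  have hy : (0:ℝ) < (61/4:ℝ)^((1/4):ℝ) := Real.rpow_pos_of_pos (by norm_num) _
  have hz : (0:ℝ) < (3:ℝ)^((1/4):ℝ) := Real.rpow_pos_of_pos (by norm_num) _
  have hprod : (3:ℝ)^((1/4):ℝ) * (61/4:ℝ)^((1/4):ℝ) = (183/4:ℝ)^((1/4):ℝ) := by
    rw [← Real.mul_rpow (by norm_num) (by norm_num)]; norm_num
  have h135 : (13/5:ℝ) ≤ (183/4:ℝ)^((1/4):ℝ) := by
    rw [show ((1:ℝ)/4) = (((4:ℕ)):ℝ)⁻¹ by norm_num]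
    calc (13/5:ℝ) = ((13/5:ℝ)^(4:ℕ))^((((4:ℕ)):ℝ)⁻¹) :=
          (Real.pow_rpow_inv_natCast (by norm_num) (by norm_num)).symm
      _ ≤ (183/4:ℝ)^((((4:ℕ)):ℝ)⁻¹) :=
          Real.rpow_le_rpow (by positivity) (by norm_num) (by positivity)
  have hzy : (13/5:ℝ) ≤ (3:ℝ)^((1/4):ℝ) * (61/4:ℝ)^((1/4):ℝ) := by rw [hprod]; exact h135
  have hlow := Gamma_lower (1/4) (by norm_num) (by norm_num) 15
  rw [show ((1:ℝ)/4 + (15:ℕ)) = (61/4:ℝ) by norm_num,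
      show ((61:ℝ)/4 + 1) = (1/4:ℝ) + (16:ℕ) by norm_num] at hlow
  rw [Gamma_shift (1/4) (by norm_num) 16] at hlow
  have hP : (∏ k ∈ range 16, ((1/4:ℝ) + (k:ℕ))) = 3080000333445961550625/4294967296 := by
    norm_num [Finset.prod_range_succ]
  rw [hP] at hlow
  have hfac : ((Nat.factorial 15 : ℕ) : ℝ) = 1307674368000 := by norm_num [Nat.factorial]
  rw [hfac] at hlow
  have hG : (0:ℝ) < Real.Gamma (1/4) := Real.Gamma_pos_of_pos (by norm_num)
  have hval : Gfun (1/2) = (3/8) * (Real.Gamma (1/4) * (3:ℝ)^((1/4):ℝ)) := by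
    rw [Gfun_eq]
    rw [show ((3:ℝ) - 1/2)/2 = 1/4 + 1 by norm_num,
      Real.Gamma_add_one (by norm_num : (1/4:ℝ) ≠ 0),
      show ((1:ℝ)/2)/2 = ((1/4):ℝ) by norm_num]
    ring
  rw [hval]
  have step : (1307674368000 : ℝ) * ((3:ℝ)^((1/4):ℝ) * (61/4:ℝ)^((1/4):ℝ)) /
      (3080000333445961550625/4294967296) ≤ Real.Gamma (1/4) * (3:ℝ)^((1/4):ℝ) := by
    rw [div_le_iff₀ (by norm_num : (0:ℝ) < 3080000333445961550625/4294967296)]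
    calc (1307674368000:ℝ) * ((3:ℝ)^((1/4):ℝ) * (61/4:ℝ)^((1/4):ℝ))
        = ((1307674368000:ℝ) * (61/4:ℝ)^((1/4):ℝ)) * (3:ℝ)^((1/4):ℝ) := by ring
      _ ≤ ((3080000333445961550625/4294967296 : ℝ) * Real.Gamma (1/4)) * (3:ℝ)^((1/4):ℝ) :=
          mul_le_mul_of_nonneg_right hlow hz.le
      _ = Real.Gamma (1/4) * (3:ℝ)^((1/4):ℝ) * (3080000333445961550625/4294967296) := by ring
  calc Real.sqrt π < 1.7725 := hsqrtpi
    _ ≤ (3/8) * ((1307674368000 : ℝ) * (13/5) / (3080000333445961550625/4294967296)) := by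
        norm_num
    _ ≤ (3/8) * ((1307674368000 : ℝ) * ((3:ℝ)^((1/4):ℝ) * (61/4:ℝ)^((1/4):ℝ)) /
          (3080000333445961550625/4294967296)) := by gcongr
    _ ≤ (3/8) * (Real.Gamma (1/4) * (3:ℝ)^((1/4):ℝ)) := by
        exact mul_le_mul_of_nonneg_left step (by norm_num)

lemma G_98 : Gfun (49/50) < Real.sqrt π := by
  rw [Gfun_eq]
  rw [show ((3:ℝ) - 49/50)/2 = 101/100 by norm_num,
    show ((49:ℝ)/50)/2 = (49/100:ℝ) by norm_num]
  have hG : Real.Gamma (101/100) ≤ 1 := Gamma_le_one (by norm_num) (by norm_num)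
  have hGpos : 0 < Real.Gamma (101/100) := Real.Gamma_pos_of_pos (by norm_num)
  have h3 : (3:ℝ)^((49/100):ℝ) ≤ Real.sqrt 3 := by
    rw [Real.sqrt_eq_rpow]
    exact Real.rpow_le_rpow_of_exponent_le (by norm_num) (by norm_num)
  have h3pos : (0:ℝ) < (3:ℝ)^((49/100):ℝ) := Real.rpow_pos_of_pos (by norm_num) _
  have hfin : (51/50:ℝ) * Real.sqrt 3 < Real.sqrt π := by
    rw [Real.lt_sqrt (by positivity)]
    have he : ((51/50:ℝ) * Real.sqrt 3)^2 = (51/50)^2 * 3 := by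
      rw [mul_pow, Real.sq_sqrt (by norm_num : (0:ℝ) ≤ 3)]
    rw [he]
    nlinarith [Real.pi_gt_d6]
  calc (2 - 49/50) * Real.Gamma (101/100) * (3:ℝ)^((49/100):ℝ)
      ≤ (2 - 49/50) * 1 * Real.sqrt 3 := by gcongr
    _ = (51/50:ℝ) * Real.sqrt 3 := by norm_num
    _ < Real.sqrt π := hfin

lemma no_interior_min {a b r : ℝ} (ha : 0 ≤ a) (hb : b ≤ 1) (hr : r ∈ Ioo a b)
    (hmin : ∀ y ∈ Icc a b, Gfun r ≤ Gfun y) : False := by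
  obtain ⟨hra, hrb⟩ := hr
  have hε : 0 < min (r - a) (b - r) := lt_min (by linarith) (by linarith)
  have hua : a ≤ r - min (r - a) (b - r) := by
    have := min_le_left (r - a) (b - r); linarith
  have hvb : r + min (r - a) (b - r) ≤ b := by
    have := min_le_right (r - a) (b - r); linarith
  have huv : r - min (r - a) (b - r) < r + min (r - a) (b - r) := by linarith
  have key := Gfun_midpoint (p := r - min (r - a) (b - r)) (q := r + min (r - a) (b - r))
    (by linarith) huv (by linarith)
  have hmid : (r - min (r - a) (b - r) + (r + min (r - a) (b - r)))/2 = r := by ring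
  rw [hmid] at key
  have h1 : Gfun r ≤ Gfun (r - min (r - a) (b - r)) :=
    hmin _ ⟨by linarith, by linarith⟩
  have h2 : Gfun r ≤ Gfun (r + min (r - a) (b - r)) :=
    hmin _ ⟨by linarith, by linarith⟩
  have hGr : 0 < Gfun r := Gfun_pos (by linarith)
  nlinarith

lemma min_principle {a b r : ℝ} (ha : 0 ≤ a) (hb : b ≤ 1) (hr : r ∈ Ioo a b) :
    min (Gfun a) (Gfun b) < Gfun r := by
  have hab : a < b := lt_trans hr.1 hr.2
  have hne : (Icc a b).Nonempty := ⟨a, by constructor <;> linarith⟩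
  obtain ⟨x, hx, hxmin⟩ := isCompact_Icc.exists_isMinOn hne
    (Gfun_continuousOn.mono (Icc_subset_Icc ha hb))
  have hxmin' : ∀ y ∈ Icc a b, Gfun x ≤ Gfun y := fun y hy => hxmin hy
  have hx_end : x = a ∨ x = b := by
    by_contra hcon
    push_neg at hcon
    have hxIoo : x ∈ Ioo a b :=
      ⟨lt_of_le_of_ne hx.1 (Ne.symm hcon.1), lt_of_le_of_ne hx.2 hcon.2⟩
    exact no_interior_min ha hb hxIoo hxmin'
  by_contra hle
  push_neg at hle
  have hxab : min (Gfun a) (Gfun b) ≤ Gfun x := by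
    rcases hx_end with h | h <;> subst h
    · exact min_le_left _ _
    · exact min_le_right _ _
  have hrmin : ∀ y ∈ Icc a b, Gfun r ≤ Gfun y := fun y hy =>
    le_trans (le_trans hle hxab) (hxmin' y hy)
  exact no_interior_min ha hb hr hrmin

lemma compare_eq {p : ℝ} (hp : p ∈ Ioo (0:ℝ) 1) :
    2 * Real.sqrt π * (3:ℝ) ^ (-p / 2) - (1 - p) * (2 - p) * Real.Gamma ((1 - p) / 2)
      = (Real.sqrt π - Gfun p) * (2 * (3:ℝ) ^ (-p / 2)) := by
  obtain ⟨hp0, hp1⟩ := hp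
  have h1 : (1 - p) * Real.Gamma ((1 - p)/2) = 2 * Real.Gamma ((3 - p)/2) := by
    have h2 := Real.Gamma_add_one (show ((1 - p)/2 : ℝ) ≠ 0 by
      intro h; rw [div_eq_zero_iff] at h; rcases h with h | h <;> linarith)
    rw [show ((1 - p)/2 + 1 : ℝ) = (3 - p)/2 by ring] at h2
    linarith [h2]
  have hE : (3:ℝ)^(p/2) * (3:ℝ)^(-p/2) = 1 := by
    rw [← Real.rpow_add (by norm_num : (0:ℝ) < 3),
      show p/2 + -p/2 = (0:ℝ) by ring, Real.rpow_zero]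
  rw [Gfun_eq]
  linear_combination (-(2 - p)) * h1 + (2 * (2 - p) * Real.Gamma ((3 - p)/2)) * hE

theorem exists_unique_crossing :
    ∃ p₀ ∈ Ioo (0:ℝ) 1,
      2 * Real.sqrt π * (3:ℝ) ^ (-p₀ / 2)
        = (1 - p₀) * (2 - p₀) * Real.Gamma ((1 - p₀) / 2) ∧
      (∀ p ∈ Ioo (0:ℝ) 1,
        2 * Real.sqrt π * (3:ℝ) ^ (-p / 2)
          = (1 - p) * (2 - p) * Real.Gamma ((1 - p) / 2) → p = p₀) ∧
      (∀ p ∈ Ioo p₀ 1,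
        2 * Real.sqrt π * (3:ℝ) ^ (-p / 2)
          > (1 - p) * (2 - p) * Real.Gamma ((1 - p) / 2)) ∧
      (∀ p ∈ Ioo (0:ℝ) p₀,
        2 * Real.sqrt π * (3:ℝ) ^ (-p / 2)
          < (1 - p) * (2 - p) * Real.Gamma ((1 - p) / 2)) := by
  -- IVT to get the crossing point
  have hcont : ContinuousOn Gfun (Icc (1/2 : ℝ) (49/50)) :=
    Gfun_continuousOn.mono (Icc_subset_Icc (by norm_num) (by norm_num))
  have hmem : Real.sqrt π ∈ Ioo (Gfun (49/50)) (Gfun (1/2)) := ⟨G_98, G_half⟩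
  obtain ⟨p₀, hp₀mem, hGp₀⟩ := intermediate_value_Ioo' (by norm_num : (1/2:ℝ) ≤ 49/50)
    hcont hmem
  obtain ⟨hp₀l, hp₀r⟩ := hp₀mem
  have hp₀Ioo : p₀ ∈ Ioo (0:ℝ) 1 := ⟨by linarith, by linarith⟩
  -- sign of Gfun - √π on the two sides
  have sign_left : ∀ p ∈ Ioo (0:ℝ) p₀, Real.sqrt π < Gfun p := by
    intro p hp
    rcases lt_trichotomy p (1/2) with h | h | h
    · have hmin := min_principle (a := 0) (b := 1/2) le_rfl (by norm_num) ⟨hp.1, h⟩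
      have : Real.sqrt π ≤ min (Gfun 0) (Gfun (1/2)) := le_min (le_of_eq G_zero.symm) G_half.le
      linarith
    · rw [h]; exact G_half
    · have hmin := min_principle (a := 1/2) (b := p₀) (by norm_num) (by linarith) ⟨h, hp.2⟩
      have : Real.sqrt π ≤ min (Gfun (1/2)) (Gfun p₀) := le_min G_half.le (le_of_eq hGp₀.symm)
      linarith
  have sign_right : ∀ p ∈ Ioo p₀ 1, Gfun p < Real.sqrt π := by
    intro p hp
    by_contra hcon
    push_neg at hcon
    have hmin := min_principle (a := 1/2) (b := p) (by norm_num) hp.2.le ⟨hp₀l, hp.1⟩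
    have : Real.sqrt π ≤ min (Gfun (1/2)) (Gfun p) := le_min G_half.le hcon
    rw [hGp₀] at hmin
    linarith
  refine ⟨p₀, hp₀Ioo, ?_, ?_, ?_, ?_⟩
  · have h := compare_eq hp₀Ioo
    rw [hGp₀, sub_self, zero_mul] at h
    linarith [h]
  · intro p hp heq
    have h := compare_eq hp
    rw [heq, sub_self] at h
    have hpow : (0:ℝ) < 2 * (3:ℝ)^(-p/2) := by
      have := Real.rpow_pos_of_pos (show (0:ℝ) < 3 by norm_num) (-p/2)
      positivity
    have hG : Gfun p = Real.sqrt π := by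
      rcases mul_eq_zero.mp h.symm with h' | h'
      · linarith [h']
      · exact absurd h' hpow.ne'
    rcases lt_trichotomy p p₀ with h' | h' | h'
    · exfalso; have := sign_left p ⟨hp.1, h'⟩; rw [hG] at this; exact lt_irrefl _ this
    · exact h'
    · exfalso; have := sign_right p ⟨h', hp.2⟩; rw [hG] at this; exact lt_irrefl _ this
  · intro p hp
    have hpIoo : p ∈ Ioo (0:ℝ) 1 := ⟨by linarith [hp.1], hp.2⟩
    have h := compare_eq hpIoo
    have hpow : (0:ℝ) < 2 * (3:ℝ)^(-p/2) := by
      have := Real.rpow_pos_of_pos (show (0:ℝ) < 3 by norm_num) (-p/2)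
      positivity
    have hs := sign_right p hp
    have : 0 < (Real.sqrt π - Gfun p) * (2 * (3:ℝ)^(-p/2)) :=
      mul_pos (by linarith) hpow
    linarith
  · intro p hp
    have hpIoo : p ∈ Ioo (0:ℝ) 1 := ⟨hp.1, by linarith [hp.2]⟩
    have h := compare_eq hpIoo
    have hpow : (0:ℝ) < 2 * (3:ℝ)^(-p/2) := by
      have := Real.rpow_pos_of_pos (show (0:ℝ) < 3 by norm_num) (-p/2)
      positivity
    have hs := sign_left p hp
    have : (Real.sqrt π - Gfun p) * (2 * (3:ℝ)^(-p/2)) < 0 :=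
      mul_neg_of_neg_of_pos (by linarith) hpow
    linarith
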